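/- Let k' < k be positive integers and let U and U' be disjoint subsets of a matroid with |U'| ≤ k − k'. If U' ∩ span(D_{k'}(U)) = ∅, then D_k(U) = D_k(U ∪ U'), where D_k(X) denotes the k-deadlock of X, i.e., the unique inclusion-wise maximal k-overcrowded subset of X. -/

import Mathlib

noncomputable def mrk {α : Type*} (M : Matroid α) (X : Set α) : ℕ :=
  sSup {n | ∃ I, I ⊆ X ∧ M.Indep I ∧ I.ncard = n}

def mspan {α : Type*} (M : Matroid α) (X : Set α) : Set α :=
  {x ∈ M.E | mrk M (X ∪ {x}) = mrk M X}

/-- A set `S` is `k`-overcrowded if `|S \ Sp| ≥ k·(rk S − rk Sp)` for every `Sp ⊆ S`. -/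
def Overcrowded {α : Type*} (M : Matroid α) (k : ℕ) (S : Set α) : Prop :=
  ∀ Sp ⊆ S, k * (mrk M S - mrk M Sp) ≤ (S \ Sp).ncard

/-- `D` is the `k`-deadlock of `U`: the inclusion-wise maximal `k`-overcrowded subset
of `U`. -/
def IsDeadlock {α : Type*} (M : Matroid α) (k : ℕ) (U D : Set α) : Prop :=
  D ⊆ U ∧ Overcrowded M k D ∧ ∀ S ⊆ U, Overcrowded M k S → S ⊆ D

section Aux

open Set

variable {α : Type*} {M : Matroid α} {I X Y : Set α} {x : α}

lemma mrk_bdd [M.Finite] (X : Set α) :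
    BddAbove {n | ∃ I, I ⊆ X ∧ M.Indep I ∧ I.ncard = n} := by
  refine ⟨M.E.ncard, ?_⟩
  rintro n ⟨I, hIX, hI, rfl⟩
  exact Set.ncard_le_ncard hI.subset_ground M.ground_finite

lemma le_mrk [M.Finite] (hI : M.Indep I) (hIX : I ⊆ X) : I.ncard ≤ mrk M X :=
  le_csSup (mrk_bdd X) ⟨I, hIX, hI, rfl⟩

lemma mrk_eq_of_basis' [M.Finite] (hI : M.IsBasis' I X) : mrk M X = I.ncard := by
  refine IsGreatest.csSup_eq ⟨⟨I, hI.subset, hI.indep, rfl⟩, ?_⟩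
  rintro n ⟨J, hJX, hJ, rfl⟩
  obtain ⟨J', hJ', hJJ'⟩ := hJ.subset_isBasis'_of_subset hJX
  have h1 : J.ncard ≤ J'.ncard :=
    Set.ncard_le_ncard hJJ' (M.set_finite J' hJ'.indep.subset_ground)
  have h2 : J'.ncard = I.ncard := by
    rw [Set.ncard_def, Set.ncard_def, hJ'.encard_eq_encard hI]
  omega

lemma mrk_mono [M.Finite] (h : X ⊆ Y) : mrk M X ≤ mrk M Y := by
  obtain ⟨I, hI⟩ := M.exists_isBasis' X
  rw [mrk_eq_of_basis' hI]
  exact le_mrk hI.indep (hI.subset.trans h)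

lemma mspan_eq [M.Finite] : mspan M X = M.closure X := by
  ext x
  simp only [mspan, Set.mem_setOf_eq, Set.union_singleton]
  constructor
  · rintro ⟨hxE, hrk⟩
    by_contra hxc
    obtain ⟨I, hI⟩ := M.exists_isBasis' X
    have hclI : x ∉ M.closure I := fun h => hxc (hI.closure_eq_closure ▸ h)
    have hxI : x ∉ I := fun hxI => hclI (M.mem_closure_of_mem' hxI hxE)
    have hind : M.Indep (insert x I) :=
      hI.indep.insert_indep_iff.mpr (Or.inl ⟨hxE, hclI⟩)
    have hle : (insert x I).ncard ≤ mrk M (insert x X) :=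
      le_mrk hind (insert_subset_insert hI.subset)
    rw [hrk, mrk_eq_of_basis' hI,
      Set.ncard_insert_of_notMem hxI (M.set_finite I hI.indep.subset_ground)] at hle
    omega
  · intro hx
    refine ⟨M.mem_ground_of_mem_closure hx, ?_⟩
    obtain ⟨I, hI⟩ := M.exists_isBasis' X
    have hI2 : M.IsBasis' I (insert x X) := by
      rw [Matroid.isBasis'_iff_isBasis_closure]
      refine ⟨?_, hI.subset.trans (subset_insert _ _)⟩
      rw [Matroid.closure_insert_eq_of_mem_closure hx]
      exact hI.isBasis_closure_right
    rw [mrk_eq_of_basis' hI2, mrk_eq_of_basis' hI]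

end Aux

open Set in
/-- For positive integers `k' < k` and disjoint sets `U, U'` with
`|U'| ≤ k − k'` and `U' ∩ span(D_{k'}(U)) = ∅`, we have `D_k(U) = D_k(U ∪ U')`. -/
theorem stmt9 {α : Type*} (M : Matroid α) [M.Finite] (k k' : ℕ)
    (hk' : 0 < k') (hkk : k' < k)
    (U U' : Set α) (hU : U ⊆ M.E) (hU' : U' ⊆ M.E) (hdisj : Disjoint U U')
    (hcard : U'.ncard ≤ k - k')
    (D₁ D₂ D₃ : Set α)
    (hD₁ : IsDeadlock M k' U D₁) (hD₂ : IsDeadlock M k U D₂)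
    (hD₃ : IsDeadlock M k (U ∪ U') D₃)
    (hspan : Disjoint U' (mspan M D₁)) :
    D₂ = D₃ := by
  obtain ⟨hD₁U, hD₁oc, hD₁max⟩ := hD₁
  obtain ⟨hD₂U, hD₂oc, hD₂max⟩ := hD₂
  obtain ⟨hD₃U, hD₃oc, hD₃max⟩ := hD₃
  have hEfin := M.ground_finite
  set D : Set α := D₃ \ U' with hDdef
  have hDsub : D ⊆ D₃ := diff_subset
  have hDU : D ⊆ U := fun x hx => ((hD₃U hx.1).resolve_right hx.2)
  have hD₃fin : D₃.Finite := hEfin.subset (hD₃U.trans (union_subset hU hU'))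
  have hU'fin : U'.Finite := hEfin.subset hU'
  have hcap : (D₃ ∩ U').ncard ≤ k - k' :=
    le_trans (Set.ncard_le_ncard inter_subset_right hU'fin) hcard
  have hD₃D : D₃ \ D = D₃ ∩ U' := by
    ext x; simp only [hDdef, mem_diff, mem_inter_iff, not_and, not_not]; tauto
  -- rank of D₃ equals rank of D
  have hrkD : mrk M D₃ = mrk M D := by
    have h1 := hD₃oc D hDsub
    rw [hD₃D] at h1
    have h2 : k * (mrk M D₃ - mrk M D) ≤ k - k' := le_trans h1 hcap
    have h3 : mrk M D₃ - mrk M D = 0 := by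
      by_contra h
      have hd : 1 ≤ mrk M D₃ - mrk M D := Nat.one_le_iff_ne_zero.mpr h
      have := Nat.mul_le_mul_left k hd
      omega
    have h4 : mrk M D₃ ≤ mrk M D := Nat.sub_eq_zero_iff_le.mp h3
    exact le_antisymm h4 (mrk_mono hDsub)
  -- D is k'-overcrowded
  have hDoc : Overcrowded M k' D := by
    intro Sp hSp
    rcases Nat.eq_zero_or_pos (mrk M D - mrk M Sp) with h0 | hpos
    · rw [h0]; simp
    · have h1 := hD₃oc Sp (hSp.trans hDsub)
      rw [hrkD] at h1
      have hSpU' : ∀ x ∈ Sp, x ∉ U' := fun x hx => (hSp hx).2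
      have hsplit : D₃ \ Sp = (D \ Sp) ∪ (D₃ ∩ U') := by
        ext x
        simp only [hDdef, mem_diff, mem_union, mem_inter_iff]
        constructor
        · rintro ⟨hx3, hxSp⟩
          by_cases hxU' : x ∈ U'
          · exact Or.inr ⟨hx3, hxU'⟩
          · exact Or.inl ⟨⟨hx3, hxU'⟩, hxSp⟩
        · rintro (⟨⟨hx3, _⟩, hxSp⟩ | ⟨hx3, hxU'⟩)
          · exact ⟨hx3, hxSp⟩
          · exact ⟨hx3, fun hxSp => hSpU' x hxSp hxU'⟩
      have hdisj2 : Disjoint (D \ Sp) (D₃ ∩ U') := by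
        refine Set.disjoint_left.mpr ?_
        rintro x ⟨hxD, -⟩ ⟨-, hxU'⟩
        exact hxD.2 hxU'
      have hcardeq : (D₃ \ Sp).ncard = (D \ Sp).ncard + (D₃ ∩ U').ncard := by
        rw [hsplit, Set.ncard_union_eq hdisj2 (hD₃fin.subset (fun x hx => hx.1.1))
          (hD₃fin.subset inter_subset_left)]
      rw [hcardeq] at h1
      have e1 : k' * (mrk M D - mrk M Sp) + (k - k') * (mrk M D - mrk M Sp)
          = k * (mrk M D - mrk M Sp) := by
        rw [← Nat.add_mul]; congr 1; omega
      have e2 : (k - k') ≤ (k - k') * (mrk M D - mrk M Sp) :=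
        Nat.le_mul_of_pos_right _ hpos
      omega
  have hDD₁ : D ⊆ D₁ := hD₁max D hDU hDoc
  -- D₃ avoids U'
  have hD₃U'' : ∀ x ∈ D₃, x ∉ U' := by
    rintro x hxD₃ hxU'
    have hxE : x ∈ M.E := hU' hxU'
    have hxspan : x ∈ mspan M D := by
      refine ⟨hxE, le_antisymm ?_ (mrk_mono subset_union_left)⟩
      calc mrk M (D ∪ {x}) ≤ mrk M D₃ :=
            mrk_mono (union_subset hDsub (singleton_subset_iff.2 hxD₃))
        _ = mrk M D := hrkD
    have hx1 : x ∈ mspan M D₁ := by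
      rw [mspan_eq] at hxspan ⊢
      exact M.closure_subset_closure hDD₁ hxspan
    exact Set.disjoint_left.mp hspan hxU' hx1
  have hD₃U2 : D₃ ⊆ U := fun x hx => (hD₃U hx).resolve_right (hD₃U'' x hx)
  exact (hD₃max D₂ (hD₂U.trans subset_union_left) hD₂oc).antisymm
    (hD₂max D₃ hD₃U2 hD₃oc)
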